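/- Let X and Z be multisets of real numbers and let f ≥ 0 be an integer. Suppose there exists a multiset Y that is simultaneously a sub-multiset of Z and a sub-multiset of X, with |Z| − |Y| ≤ f. Then for every integer k ≥ 1 with f + k ≤ |Z| and k ≤ |X|, the (f + k)-th smallest element of Z is greater than or equal to the k-th smallest element of X. -/

import Mathlib

noncomputable def kthSmallest (M : Multiset ℝ) (m : ℕ) : ℝ :=
  (M.sort (· ≤ ·)).getD (m - 1) 0

lemma sorted_filter_lt_self_le (l : List ℝ) (hl : l.Pairwise (· ≤ ·)) (i : ℕ)
    (hi : i < l.length) :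
    (l.filter (fun x => decide (x < l.get ⟨i, hi⟩))).length ≤ i := by
  have hdrop : (l.drop i).filter (fun x => decide (x < l.get ⟨i, hi⟩)) = [] := by
    rw [List.filter_eq_nil_iff]
    intro a ha
    obtain ⟨j, hj, rfl⟩ := List.mem_iff_getElem.mp ha
    rw [List.getElem_drop]
    simp only [decide_eq_true_eq, not_lt]
    have : i ≤ i + j := Nat.le_add_right _ _
    exact hl.rel_get_of_le (a := ⟨i, hi⟩)
      (b := ⟨i + j, by have := hj; simp [List.length_drop] at this; omega⟩) this
  calc (l.filter _).length
      = ((l.take i ++ l.drop i).filter (fun x => decide (x < l.get ⟨i, hi⟩))).length := by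
        rw [List.take_append_drop]
    _ ≤ i := by
        rw [List.filter_append, hdrop, List.append_nil]
        calc ((l.take i).filter _).length ≤ (l.take i).length := List.length_filter_le _ _
          _ ≤ i := by simp

lemma sorted_filter_lt_ge (l : List ℝ) (hl : l.Pairwise (· ≤ ·)) (i : ℕ)
    (hi : i < l.length) (t : ℝ) (ht : l.get ⟨i, hi⟩ < t) :
    i + 1 ≤ (l.filter (fun x => decide (x < t))).length := by
  have htake : (l.take (i + 1)).filter (fun x => decide (x < t)) = l.take (i + 1) := by
    rw [List.filter_eq_self]
    intro a ha
    obtain ⟨j, hj, rfl⟩ := List.mem_iff_getElem.mp ha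
    rw [List.getElem_take]
    simp only [decide_eq_true_eq]
    have hjl : j < l.length := lt_of_lt_of_le hj (by simp)
    have hji : j ≤ i := by
      have := hj
      simp [List.length_take] at this
      omega
    calc l[j] ≤ l.get ⟨i, hi⟩ := hl.rel_get_of_le (a := ⟨j, hjl⟩) (b := ⟨i, hi⟩) hji
      _ < t := ht
  calc i + 1 = (l.take (i + 1)).length := by simp; omega
    _ = ((l.take (i + 1)).filter (fun x => decide (x < t))).length := by rw [htake]
    _ ≤ ((l.take (i + 1) ++ l.drop (i + 1)).filter (fun x => decide (x < t))).length := by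
        rw [List.filter_append, List.length_append]; omega
    _ = _ := by rw [List.take_append_drop]

lemma card_filter_sub_le (Y Z : Multiset ℝ) (h : Y ≤ Z) (p : ℝ → Prop) [DecidablePred p] :
    Multiset.card (Z.filter p) ≤ Multiset.card (Y.filter p)
      + (Multiset.card Z - Multiset.card Y) := by
  obtain ⟨W, rfl⟩ := Multiset.le_iff_exists_add.mp h
  rw [Multiset.filter_add, Multiset.card_add, Multiset.card_add]
  have := Multiset.card_le_card (Multiset.filter_le p W)
  omega

lemma filter_card_sort (M : Multiset ℝ) (p : ℝ → Prop) [DecidablePred p] :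
    ((M.sort (· ≤ ·)).filter (fun x => decide (p x))).length = Multiset.card (M.filter p) := by
  rw [show M.filter p = ((M.sort (· ≤ ·) : Multiset ℝ)).filter p by
    rw [Multiset.sort_eq], Multiset.filter_coe, Multiset.coe_card]

theorem stmt_17 (X Z : Multiset ℝ) (f : ℕ)
    (hY : ∃ Y : Multiset ℝ, Y ≤ Z ∧ Y ≤ X ∧ Multiset.card Z - Multiset.card Y ≤ f) :
    ∀ k : ℕ, 1 ≤ k → f + k ≤ Multiset.card Z → k ≤ Multiset.card X →
      kthSmallest X k ≤ kthSmallest Z (f + k) := by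
  obtain ⟨Y, hYZ, hYX, hcard⟩ := hY
  intro k hk hfk hkX
  by_contra hlt
  push_neg at hlt
  set lx := X.sort (· ≤ ·) with hlx
  set lz := Z.sort (· ≤ ·) with hlz
  have hlenx : lx.length = Multiset.card X := Multiset.length_sort _
  have hlenz : lz.length = Multiset.card Z := Multiset.length_sort _
  have hi : k - 1 < lx.length := by omega
  have hj : f + k - 1 < lz.length := by omega
  have hsx : lx.Pairwise (· ≤ ·) := Multiset.pairwise_sort _ _
  have hsz : lz.Pairwise (· ≤ ·) := Multiset.pairwise_sort _ _
  set t := lx.get ⟨k - 1, hi⟩ with hT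
  have hxval : kthSmallest X k = t := by
    rw [kthSmallest, ← hlx, List.getD_eq_getElem _ _ hi]; rfl
  have hzval : kthSmallest Z (f + k) = lz.get ⟨f + k - 1, hj⟩ := by
    rw [kthSmallest, ← hlz, List.getD_eq_getElem _ _ hj]; rfl
  have hzt : lz.get ⟨f + k - 1, hj⟩ < t := by rw [← hxval, ← hzval]; exact hlt
  -- counts
  have h1 : f + k ≤ (lz.filter (fun x => decide (x < t))).length := by
    have := sorted_filter_lt_ge lz hsz (f + k - 1) hj t hzt
    omega
  have h2 : (lx.filter (fun x => decide (x < t))).length ≤ k - 1 :=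
    sorted_filter_lt_self_le lx hsx (k - 1) hi
  have hZc : f + k ≤ Multiset.card (Z.filter (fun x => x < t)) := by
    rw [← filter_card_sort Z (fun x => x < t)]; exact h1
  have hXc : Multiset.card (X.filter (fun x => x < t)) ≤ k - 1 := by
    rw [← filter_card_sort X (fun x => x < t)]; exact h2
  have hYc : Multiset.card (Y.filter (fun x => x < t)) ≤
      Multiset.card (X.filter (fun x => x < t)) :=
    Multiset.card_le_card (Multiset.filter_le_filter _ hYX)
  have hZY := card_filter_sub_le Y Z hYZ (fun x => x < t)
  omega
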